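/- Every weakly Hausdorff topological space is k₂-Hausdorff: if X is weakly Hausdorff, then for every compact Hausdorff space K, every continuous map f : K → X, and all points k₀, k₁ ∈ K with f(k₀) ≠ f(k₁), there exist open neighborhoods U₀ of k₀ and U₁ of k₁ in K such that f[U₀] ∩ f[U₁] = ∅. -/
import Mathlib


/-- Every weakly Hausdorff space is k₂-Hausdorff. -/
theorem weaklyHausdorff_is_k2Hausdorff {X : Type u} [TopologicalSpace X]
    (hwH : ∀ (L : Type v) [TopologicalSpace L] [CompactSpace L] [T2Space L]
      (g : L → X), Continuous g → IsClosed (Set.range g)) :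
    ∀ (K : Type v) [TopologicalSpace K] [CompactSpace K] [T2Space K]
      (f : K → X), Continuous f → ∀ k₀ k₁ : K, f k₀ ≠ f k₁ →
        ∃ U₀ U₁ : Set K, IsOpen U₀ ∧ IsOpen U₁ ∧ k₀ ∈ U₀ ∧ k₁ ∈ U₁ ∧
          f '' U₀ ∩ f '' U₁ = ∅ := by
  intro K _ _ _ f hf k₀ k₁ hne
  -- points are closed in X
  have hpt : ∀ x : X, IsClosed ({x} : Set X) := by
    intro x
    have := hwH PUnit (fun _ => x) continuous_const
    simpa using this
  -- images of closed subsets of K are closed in X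
  have hclosed : ∀ S : Set K, IsClosed S → IsClosed (f '' S) := by
    intro S hS
    haveI : CompactSpace S := isCompact_iff_compactSpace.mp hS.isCompact
    have := hwH S (f ∘ (Subtype.val : S → K)) (hf.comp continuous_subtype_val)
    simpa [Set.range_comp, Subtype.range_coe] using this
  set C₀ := f ⁻¹' {f k₀} with hC₀def
  set C₁ := f ⁻¹' {f k₁} with hC₁def
  have hC₀ : IsClosed C₀ := (hpt _).preimage hf
  have hC₁ : IsClosed C₁ := (hpt _).preimage hf
  have hdisj : Disjoint C₀ C₁ := by
    rw [Set.disjoint_left]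
    intro a ha hb
    exact hne (ha.symm.trans hb)
  obtain ⟨V, W, hV, hW, hCV, hCW, hVW⟩ := normal_separation hC₀ hC₁ hdisj
  refine ⟨f ⁻¹' (f '' Vᶜ)ᶜ, f ⁻¹' (f '' Wᶜ)ᶜ, ?_, ?_, ?_, ?_, ?_⟩
  · exact ((hclosed _ hV.isClosed_compl).isOpen_compl).preimage hf
  · exact ((hclosed _ hW.isClosed_compl).isOpen_compl).preimage hf
  · intro h
    obtain ⟨a, haV, hfa⟩ := h
    exact haV (hCV (show a ∈ C₀ from hfa))
  · intro h
    obtain ⟨a, haW, hfa⟩ := h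
    exact haW (hCW (show a ∈ C₁ from hfa))
  · ext z
    simp only [Set.mem_inter_iff, Set.mem_image, Set.mem_empty_iff_false, iff_false]
    rintro ⟨⟨a, ha, rfl⟩, ⟨b, hb, hab⟩⟩
    have haVmem : a ∈ V := by
      by_contra h
      exact ha ⟨a, h, rfl⟩
    have haWmem : a ∈ W := by
      by_contra h
      exact hb (hab ▸ ⟨a, h, rfl⟩)
    exact (Set.disjoint_left.mp hVW haVmem) haWmem
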